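/- There exist no integers l_1 ∈ [0, 2n-2], l_2 ∈ [0, 2n-3], l_3 ∈ [0, 2n-2], l_4 ∈ [0, 2n-2], l_5, ..., l_11 ∈ {0,1} with l_1 g_1 + l_2 g_2 + ... + l_11 g_11 = 0 in G and l_5 + l_6 + l_7 + l_8 + l_9 + l_10 + l_11 = 2. -/

import Mathlib

/-- The group `G = C_2 ⊕ C_{2n}^4`. -/
abbrev Gn (n : ℕ) := ZMod 2 × ZMod (2 * n) × ZMod (2 * n) × ZMod (2 * n) × ZMod (2 * n)

/-- `g₁ = e₁ + e₂`. -/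
def g1 (n : ℕ) : Gn n := (1, 1, 0, 0, 0)
/-- `g₂ = e₁ + e₃`. -/
def g2 (n : ℕ) : Gn n := (1, 0, 1, 0, 0)
/-- `g₃ = e₁ + e₄`. -/
def g3 (n : ℕ) : Gn n := (1, 0, 0, 1, 0)
/-- `g₄ = e₁ + e₅`. -/
def g4 (n : ℕ) : Gn n := (1, 0, 0, 0, 1)
def g5 (n : ℕ) : Gn n :=
  (0, (((3*n-1)/2 : ℕ) : ZMod (2*n)), (((3*n+1)/2 : ℕ) : ZMod (2*n)),
      (((3*n+1)/2 : ℕ) : ZMod (2*n)), (((3*n+1)/2 : ℕ) : ZMod (2*n)))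
def g6 (n : ℕ) : Gn n :=
  (0, (((3*n-1)/2 : ℕ) : ZMod (2*n)), (((3*n+1)/2 : ℕ) : ZMod (2*n)),
      (((3*n-1)/2 : ℕ) : ZMod (2*n)), (((n+1)/2 : ℕ) : ZMod (2*n)))
def g7 (n : ℕ) : Gn n :=
  (0, (((3*n+3)/2 : ℕ) : ZMod (2*n)), (((n+1)/2 : ℕ) : ZMod (2*n)),
      (((n-1)/2 : ℕ) : ZMod (2*n)), (((n+1)/2 : ℕ) : ZMod (2*n)))
def g8 (n : ℕ) : Gn n :=
  (0, (((n-1)/2 : ℕ) : ZMod (2*n)), (((n+1)/2 : ℕ) : ZMod (2*n)),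
      (((3*n+1)/2 : ℕ) : ZMod (2*n)), (((n-1)/2 : ℕ) : ZMod (2*n)))
def g9 (n : ℕ) : Gn n :=
  (0, (((n-1)/2 : ℕ) : ZMod (2*n)), (((n+1)/2 : ℕ) : ZMod (2*n)),
      (((n+1)/2 : ℕ) : ZMod (2*n)), (((n+1)/2 : ℕ) : ZMod (2*n)))
def g10 (n : ℕ) : Gn n :=
  (0, (((3*n+1)/2 : ℕ) : ZMod (2*n)), (((3*n+1)/2 : ℕ) : ZMod (2*n)),
      (((n+1)/2 : ℕ) : ZMod (2*n)), (((3*n+1)/2 : ℕ) : ZMod (2*n)))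
def g11 (n : ℕ) : Gn n :=
  (0, (((n+3)/2 : ℕ) : ZMod (2*n)), (((3*n+1)/2 : ℕ) : ZMod (2*n)),
      (((3*n+1)/2 : ℕ) : ZMod (2*n)), (((3*n-1)/2 : ℕ) : ZMod (2*n)))
def g12 (n : ℕ) : Gn n :=
  (1, (((n+1)/2 : ℕ) : ZMod (2*n)), (((n-1)/2 : ℕ) : ZMod (2*n)),
      (((n+1)/2 : ℕ) : ZMod (2*n)), (((3*n+1)/2 : ℕ) : ZMod (2*n)))



lemma no_sol_key (d l s : ℕ) (h1 : l + 1 < d) (h2 : s = d + 1) (hd : d ∣ l + s) : False := by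
  have h3 : d ∣ (l + s) - d := Nat.dvd_sub hd (dvd_refl d)
  have h4 : (l + s) - d = l + 1 := by omega
  rw [h4] at h3
  have := Nat.eq_zero_of_dvd_of_lt h3 h1
  omega

set_option maxHeartbeats 1600000 in
/-- There are no integers in the stated ranges with
`l₁g₁ + ⋯ + l₁₁g₁₁ = 0` in `G` and `l₅ + l₆ + l₇ + l₈ + l₉ + l₁₀ + l₁₁ = 2`. -/
theorem no_solution_case_2 (n : ℕ) (hn : 3 ≤ n) (hodd : Odd n) :
    ¬ ∃ l1 l2 l3 l4 l5 l6 l7 l8 l9 l10 l11 : ℕ,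
      l1 ≤ 2*n-2 ∧ l2 ≤ 2*n-3 ∧ l3 ≤ 2*n-2 ∧ l4 ≤ 2*n-2 ∧
      l5 ≤ 1 ∧ l6 ≤ 1 ∧ l7 ≤ 1 ∧ l8 ≤ 1 ∧ l9 ≤ 1 ∧ l10 ≤ 1 ∧ l11 ≤ 1 ∧
      l1 • g1 n + l2 • g2 n + l3 • g3 n + l4 • g4 n + l5 • g5 n +
        l6 • g6 n + l7 • g7 n + l8 • g8 n + l9 • g9 n + l10 • g10 n +
        l11 • g11 n = 0 ∧
      l5 + l6 + l7 + l8 + l9 + l10 + l11 = 2 := by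
  rintro ⟨l1, l2, l3, l4, l5, l6, l7, l8, l9, l10, l11,
    hl1, hl2, hl3, hl4, hl5, hl6, hl7, hl8, hl9, hl10, hl11, heq, hsum⟩
  obtain ⟨m, hm⟩ := hodd
  haveI : NeZero (2 * n) := ⟨by omega⟩
  have hc1 : (3*n-1)/2 = 3*m+1 := by omega
  have hc2 : (3*n+1)/2 = 3*m+2 := by omega
  have hc3 : (n+1)/2 = m+1 := by omega
  have hc4 : (n-1)/2 = m := by omega
  have hc5 : (3*n+3)/2 = 3*m+3 := by omega
  have hc6 : (n+3)/2 = m+2 := by omega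
  simp only [g1, g2, g3, g4, g5, g6, g7, g8, g9, g10, g11, hc1, hc2, hc3, hc4, hc5, hc6,
    Prod.smul_mk, Prod.mk_add_mk, smul_zero, nsmul_eq_mul, mul_one, add_zero, zero_add,
    Prod.mk_eq_zero] at heq
  obtain ⟨h0, hA, hB, hC, hD⟩ := heq
  have D2 : (2*n) ∣ l1 + (l5*(3*m+1) + l6*(3*m+1) + l7*(3*m+3) + l8*m + l9*m
      + l10*(3*m+2) + l11*(m+2)) := by
    refine (ZMod.natCast_eq_zero_iff _ _).mp ?_
    push_cast at hA ⊢
    linear_combination hA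
  have D3 : (2*n) ∣ l2 + (l5*(3*m+2) + l6*(3*m+2) + l7*(m+1) + l8*(m+1) + l9*(m+1)
      + l10*(3*m+2) + l11*(3*m+2)) := by
    refine (ZMod.natCast_eq_zero_iff _ _).mp ?_
    push_cast at hB ⊢
    linear_combination hB
  have D4 : (2*n) ∣ l3 + (l5*(3*m+2) + l6*(3*m+1) + l7*m + l8*(3*m+2) + l9*(m+1)
      + l10*(m+1) + l11*(3*m+2)) := by
    refine (ZMod.natCast_eq_zero_iff _ _).mp ?_
    push_cast at hC ⊢
    linear_combination hC
  have D5 : (2*n) ∣ l4 + (l5*(3*m+2) + l6*(m+1) + l7*(m+1) + l8*m + l9*(m+1)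
      + l10*(3*m+2) + l11*(3*m+1)) := by
    refine (ZMod.natCast_eq_zero_iff _ _).mp ?_
    push_cast at hD ⊢
    linear_combination hD
  clear hA hB hC hD h0
  interval_cases l5 <;> interval_cases l6 <;> interval_cases l7 <;> interval_cases l8 <;>
    interval_cases l9 <;> interval_cases l10 <;> interval_cases l11 <;>
    first
      | omega
      | exact no_sol_key (2*n) l1 _ (by omega) (by omega) D2
      | exact no_sol_key (2*n) l2 _ (by omega) (by omega) D3
      | exact no_sol_key (2*n) l3 _ (by omega) (by omega) D4
      | exact no_sol_key (2*n) l4 _ (by omega) (by omega) D5
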